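/- Let X be a finite set, θ, θ' two types with prior probabilities π(θ), π(θ') ≥ 0 summing to 1 and π(θ) > 0, and let p^θ, p^{θ'} be probability mass functions on X. Let X⁺ = {x ∈ X : p^θ(x)π(θ) + p^{θ'}(x)π(θ') > 0}. Then the Bayesian update preserves the belief in expectation in a submartingale sense: ∑_{x ∈ X⁺} p^θ(x) · (p^θ(x)π(θ)) / (p^θ(x)π(θ) + p^{θ'}(x)π(θ')) ≥ π(θ). -/

import Mathlib

open Finset

theorem stmt0 {X : Type*} [Fintype X] (p q : X → ℝ) (a b : ℝ)
    (hp0 : ∀ x, 0 ≤ p x) (hp1 : ∑ x, p x = 1)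
    (hq0 : ∀ x, 0 ≤ q x) (hq1 : ∑ x, q x = 1)
    (ha : 0 < a) (hb : 0 ≤ b) (hab : a + b = 1) :
    a ≤ ∑ x ∈ univ.filter (fun x => 0 < p x * a + q x * b),
        p x * (p x * a) / (p x * a + q x * b) := by
  set S := univ.filter (fun x => 0 < p x * a + q x * b) with hS
  have hg : ∀ x ∈ S, 0 < p x * a + q x * b := by
    intro x hx; exact (mem_filter.mp hx).2
  have hzero : ∀ x ∈ (univ : Finset X), x ∉ S → p x = 0 := by
    intro x _ hx
    simp only [hS, mem_filter, mem_univ, true_and, not_lt] at hx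
    have h1 : 0 ≤ p x * a := mul_nonneg (hp0 x) ha.le
    have h2 : 0 ≤ q x * b := mul_nonneg (hq0 x) hb
    have : p x * a = 0 := le_antisymm (by linarith) h1
    exact (mul_eq_zero.mp this).resolve_right ha.ne'
  have hzero' : ∀ x ∈ (univ : Finset X), x ∉ S → q x * b = 0 := by
    intro x hx hxs
    simp only [hS, mem_filter, mem_univ, true_and, not_lt] at hxs
    have h1 : p x = 0 := hzero x hx (by simpa [hS] using hxs)
    have h2 : 0 ≤ q x * b := mul_nonneg (hq0 x) hb
    nlinarith
  have hsumP : ∑ x ∈ S, p x = 1 := by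
    rw [← hp1]
    exact sum_subset (filter_subset _ _) hzero
  have hsumG : ∑ x ∈ S, (p x * a + q x * b) = 1 := by
    have : ∑ x ∈ S, (p x * a + q x * b) = ∑ x, (p x * a + q x * b) := by
      apply sum_subset (filter_subset _ _)
      intro x hx hxs
      have h1 : p x = 0 := hzero x hx hxs
      have h2 : q x * b = 0 := hzero' x hx hxs
      simp [h1, h2]
    rw [this, sum_add_distrib, ← sum_mul, ← sum_mul, hp1, hq1]
    linarith
  have key := sq_sum_div_le_sum_sq_div S p hg
  rw [hsumP, hsumG] at key
  simp only [one_pow, div_one] at key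
  calc a = a * 1 := (mul_one a).symm
    _ ≤ a * ∑ x ∈ S, p x ^ 2 / (p x * a + q x * b) :=
        mul_le_mul_of_nonneg_left key ha.le
    _ = ∑ x ∈ S, p x * (p x * a) / (p x * a + q x * b) := by
        rw [mul_sum]; apply sum_congr rfl; intro x _; ring
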